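/- M_43 = {1, 2, 6, 42, 43, 86, 258, 77658}; that is, a positive integer n satisfies S_n(n) ≡ 43 (mod n) if and only if n ∈ {1, 2, 6, 42, 43, 86, 258, 77658}. -/

import Mathlib

/-- `S k n = ∑_{i=1}^{n} i^k`. -/
def S (k n : ℕ) : ℕ := ∑ i ∈ Finset.Icc 1 n, i ^ k

open Finset

namespace Stmt11

lemma card_mult (p c : ℕ) (hp : 0 < p) :
    ((Finset.range (c * p)).filter (fun i => p ∣ i)).card = c := by
  have himg : (Finset.range (c * p)).filter (fun i => p ∣ i)
      = (Finset.range c).image (fun j => j * p) := by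
    ext i
    simp only [mem_filter, mem_range, mem_image]
    constructor
    · rintro ⟨h1, k, rfl⟩
      refine ⟨k, ?_, (mul_comm p k).symm⟩
      by_contra hk
      push_neg at hk
      have : c * p ≤ p * k := by
        calc c * p = p * c := mul_comm c p
        _ ≤ p * k := Nat.mul_le_mul_left p hk
      omega
    · rintro ⟨j, hj, rfl⟩
      exact ⟨by exact Nat.mul_lt_mul_of_lt_of_le hj le_rfl hp, ⟨j, mul_comm j p⟩⟩
  rw [himg, Finset.card_image_of_injective _ (mul_left_injective₀ hp.ne'), Finset.card_range]

lemma sum_pow_range_mul (q m n : ℕ) :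
    ∑ i ∈ Finset.range (m * q), ((i : ZMod q)) ^ n
      = (m : ZMod q) * ∑ i ∈ Finset.range q, ((i : ZMod q)) ^ n := by
  induction m with
  | zero => simp
  | succ m ih =>
    have h1 : (m + 1) * q = m * q + q := by ring
    rw [h1, Finset.range_add, Finset.sum_union, ih, Finset.sum_map]
    · have h2 : ∀ j ∈ Finset.range q,
          (((addLeftEmbedding (m * q)) j : ℕ) : ZMod q) ^ n = ((j : ZMod q)) ^ n := by
        intro j _
        simp only [addLeftEmbedding_apply]
        push_cast
        rw [ZMod.natCast_self]
        ring_nf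
      rw [Finset.sum_congr rfl h2]
      push_cast
      ring
    · rw [Finset.disjoint_left]
      intro a ha hb
      simp only [mem_range] at ha
      simp only [Finset.mem_map, addLeftEmbedding_apply, mem_range] at hb
      obtain ⟨b, _, rfl⟩ := hb
      omega

lemma key_mod {p e n : ℕ} (hp : p.Prime) (he : 0 < e) (hd : p ^ e ∣ n) (hn : 0 < n) :
    S n n ≡ (if (p - 1) ∣ n then n - n / p else 0) [MOD p ^ e] := by
  haveI : Fact p.Prime := ⟨hp⟩
  haveI : NeZero (p ^ e) := ⟨pow_ne_zero _ hp.pos.ne'⟩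
  set q := p ^ e with hqdef
  have hq0 : 0 < q := pow_pos hp.pos e
  have hpq : p ∣ q := dvd_pow_self p he.ne'
  have hqn : q ≤ n := Nat.le_of_dvd hn hd
  have hen : e ≤ n := le_of_lt (lt_of_lt_of_le (Nat.lt_pow_self (n := e) hp.one_lt) hqn)
  -- Step 1 : S n n is the sum over `range n` in `ZMod q`
  have hS : ((S n n : ℕ) : ZMod q) = ∑ i ∈ Finset.range n, ((i : ZMod q)) ^ n := by
    have h0 : Finset.range (n + 1) = insert 0 (Finset.Icc 1 n) := by
      ext i; simp [Nat.lt_succ_iff]; omega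
    have h2 : ((n : ℕ) : ZMod q) = 0 := (ZMod.natCast_eq_zero_iff n q).mpr hd
    have h5 : ((S n n : ℕ) : ZMod q) = ∑ i ∈ Finset.Icc 1 n, ((i : ZMod q)) ^ n := by
      unfold S; push_cast; rfl
    have key : ∑ i ∈ Finset.range (n + 1), ((i : ZMod q)) ^ n
        = ∑ i ∈ Finset.Icc 1 n, ((i : ZMod q)) ^ n := by
      rw [h0, Finset.sum_insert (by simp)]
      norm_num [zero_pow hn.ne']
    have key2 : ∑ i ∈ Finset.range (n + 1), ((i : ZMod q)) ^ n
        = ∑ i ∈ Finset.range n, ((i : ZMod q)) ^ n := by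
      rw [Finset.sum_range_succ, h2, zero_pow hn.ne', add_zero]
    rw [h5, ← key, key2]
  -- Step 2 : periodicity
  have hsplit : ∑ i ∈ Finset.range n, ((i : ZMod q)) ^ n
      = ((n / q : ℕ) : ZMod q) * ∑ i ∈ Finset.range q, ((i : ZMod q)) ^ n := by
    have := sum_pow_range_mul q (n / q) n
    rwa [Nat.div_mul_cancel hd] at this
  -- the multiples-of-p part is zero
  have hzero : ∑ i ∈ (Finset.range q).filter (fun i => p ∣ i), ((i : ZMod q)) ^ n = 0 := by
    apply Finset.sum_eq_zero
    intro i hi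
    obtain ⟨-, j, rfl⟩ : i ∈ Finset.range q ∧ ∃ j, i = p * j := by
      exact ⟨(Finset.mem_filter.mp hi).1, (Finset.mem_filter.mp hi).2⟩
    have hq_dvd : q ∣ (p * j) ^ n :=
      dvd_trans (pow_dvd_pow p hen) (pow_dvd_pow_of_dvd (dvd_mul_right p j) n)
    have h0 : ((((p * j) ^ n : ℕ)) : ZMod q) = 0 := (ZMod.natCast_eq_zero_iff _ _).mpr hq_dvd
    push_cast at h0 ⊢
    exact h0
  by_cases hcase : (p - 1) ∣ n
  · -- all units have x^n = 1
    rw [if_pos hcase]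
    have hphi : Nat.totient q ∣ n := by
      rw [hqdef, Nat.totient_prime_pow hp he]
      have hcp : Nat.Coprime p (p - 1) := by
        have h : p - 1 + 1 = p := Nat.succ_pred_eq_of_pos hp.pos
        rw [← h]; simp [Nat.coprime_self_add_left]
      refine Nat.Coprime.mul_dvd_of_dvd_of_dvd (Nat.Coprime.pow_left _ hcp) ?_ hcase
      exact dvd_trans (pow_dvd_pow p (by omega)) hd
    have hone : ∀ i ∈ (Finset.range q).filter (fun i => ¬ p ∣ i), ((i : ZMod q)) ^ n = 1 := by
      intro i hi
      have hnd : ¬ p ∣ i := (Finset.mem_filter.mp hi).2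
      have hcop : i.Coprime q := Nat.Coprime.pow_right _ ((hp.coprime_iff_not_dvd.mpr hnd).symm)
      obtain ⟨t, ht⟩ := hphi
      have hmod : i ^ n ≡ 1 [MOD q] := by
        rw [ht, pow_mul]
        calc (i ^ q.totient) ^ t ≡ 1 ^ t [MOD q] := Nat.ModEq.pow t (Nat.ModEq.pow_totient hcop)
        _ = 1 := one_pow t
      have := (ZMod.natCast_eq_natCast_iff _ _ _).mpr hmod
      push_cast at this
      exact this
    have hcard : ((Finset.range q).filter (fun i => ¬ p ∣ i)).card = q - q / p := by
      obtain ⟨c, hc⟩ := hpq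
      have h1 : ((Finset.range q).filter (fun i => p ∣ i)).card = c := by
        rw [hc, mul_comm p c]; exact card_mult p c hp.pos
      have h2 := Finset.card_filter_add_card_filter_not
        (s := Finset.range q) (p := fun i => p ∣ i)
      have h3 : q / p = c := by rw [hc, Nat.mul_div_cancel_left _ hp.pos]
      rw [Finset.card_range] at h2
      omega
    have hsum2 : ∑ i ∈ Finset.range q, ((i : ZMod q)) ^ n = ((q - q / p : ℕ) : ZMod q) := by
      rw [← Finset.sum_filter_add_sum_filter_not (Finset.range q) (fun i => p ∣ i), hzero, zero_add,
        Finset.sum_congr rfl hone]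
      simp [hcard]
    have hid : (n / q) * (q - q / p) = n - n / p := by
      obtain ⟨c, hc⟩ := hpq
      obtain ⟨m', hm'⟩ := hd
      have h1 : n / q = m' := by rw [hm', Nat.mul_div_cancel_left _ hq0]
      have h2 : q / p = c := by rw [hc, Nat.mul_div_cancel_left _ hp.pos]
      have h3 : n / p = c * m' := by
        rw [hm', hc, mul_assoc, Nat.mul_div_cancel_left _ hp.pos]
      rw [Nat.mul_sub, h1, h2, h3]
      congr 1
      · rw [hm', mul_comm]
      · ring
    have : ((S n n : ℕ) : ZMod q) = (((n - n / p) : ℕ) : ZMod q) := by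
      rw [hS, hsplit, hsum2, ← Nat.cast_mul, hid]
    exact (ZMod.natCast_eq_natCast_iff _ _ _).mp this
  · rw [if_neg hcase]
    -- find a unit with a^n ≢ 1 (mod p)
    obtain ⟨g, hg⟩ := IsCyclic.exists_generator (α := (ZMod p)ˣ)
    have horder : orderOf g = p - 1 := by
      rw [orderOf_eq_card_of_forall_mem_zpowers hg, Nat.card_eq_fintype_card, ZMod.card_units]
    have hgn : g ^ n ≠ 1 := by
      intro h
      exact hcase (horder ▸ orderOf_dvd_of_pow_eq_one h)
    set a := ((g : ZMod p)).val with hadef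
    have hacop : a.Coprime p := ZMod.val_coe_unit_coprime g
    have hacast : ((a : ℕ) : ZMod p) = (g : ZMod p) := ZMod.natCast_rightInverse _
    have hapos : 0 < a := by
      rcases Nat.eq_zero_or_pos a with h0 | h
      · exfalso
        rw [h0] at hacop
        have := Nat.coprime_zero_left p |>.mp hacop
        exact hp.one_lt.ne' this
      · exact h
    have h1a : 1 ≤ a ^ n := Nat.one_le_pow _ _ hapos
    have hapow : ¬ p ∣ (a ^ n - 1) := by
      intro hdvd1
      have hmod : a ^ n ≡ 1 [MOD p] := ((Nat.modEq_iff_dvd' h1a).mpr hdvd1).symm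
      have hcast : ((a ^ n : ℕ) : ZMod p) = ((1 : ℕ) : ZMod p) :=
        (ZMod.natCast_eq_natCast_iff _ _ _).mpr hmod
      have hgp : ((g : ZMod p)) ^ n = 1 := by
        push_cast at hcast
        rw [hacast] at hcast
        exact hcast
      apply hgn
      apply Units.ext
      rw [Units.val_pow_eq_pow_val, Units.val_one]
      exact hgp
    have hacopq : a.Coprime q := hacop.pow_right e
    set u : ZMod q := ((a : ℕ) : ZMod q) with hu
    set U := ZMod.unitOfCoprime a hacopq with hUdef
    have hUu : (U : ZMod q) = u := ZMod.coe_unitOfCoprime a hacopq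
    -- sum over range q = sum over all of ZMod q
    have huniv : ∑ i ∈ Finset.range q, ((i : ZMod q)) ^ n = ∑ x : ZMod q, x ^ n := by
      refine Finset.sum_nbij' (fun i => ((i : ℕ) : ZMod q)) (fun x => x.val) ?_ ?_ ?_ ?_ ?_
      · intro i _; exact Finset.mem_univ _
      · intro x _; exact Finset.mem_range.mpr (ZMod.val_lt x)
      · intro i hi; exact ZMod.val_cast_of_lt (Finset.mem_range.mp hi)
      · intro x _; exact ZMod.natCast_rightInverse x
      · intro i _; rfl
    have hnonunit : ∑ x ∈ Finset.univ.filter (fun x : ZMod q => ¬ IsUnit x), x ^ n = 0 := by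
      apply Finset.sum_eq_zero
      intro x hx
      have hxu : ¬ IsUnit x := (Finset.mem_filter.mp hx).2
      have hpv : p ∣ x.val := by
        by_contra hndvd
        apply hxu
        have hcop : x.val.Coprime q := ((hp.coprime_iff_not_dvd.mpr hndvd).symm).pow_right e
        have h1 : IsUnit ((x.val : ℕ) : ZMod q) := (ZMod.isUnit_iff_coprime _ _).mpr hcop
        rwa [ZMod.natCast_rightInverse x] at h1
      obtain ⟨j, hj⟩ := hpv
      have h0 : (((x.val ^ n : ℕ)) : ZMod q) = 0 := by
        refine (ZMod.natCast_eq_zero_iff _ _).mpr ?_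
        rw [hj]
        exact dvd_trans (pow_dvd_pow p hen) (pow_dvd_pow_of_dvd (dvd_mul_right p j) n)
      calc x ^ n = (((x.val : ℕ)) : ZMod q) ^ n := by rw [ZMod.natCast_rightInverse x]
      _ = (((x.val ^ n : ℕ)) : ZMod q) := by push_cast; rfl
      _ = 0 := h0
    set TU := ∑ x ∈ Finset.univ.filter (fun x : ZMod q => IsUnit x), x ^ n with hTUdef
    have hperm : ∑ x ∈ Finset.univ.filter (fun x : ZMod q => IsUnit x), ((U : ZMod q) * x) ^ n
        = TU := by
      rw [hTUdef]
      refine Finset.sum_equiv (Units.mulLeft U) ?_ ?_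
      · intro x
        simp only [Finset.mem_filter, Finset.mem_univ, true_and]
        constructor
        · intro h
          have : (Units.mulLeft U) x = (U : ZMod q) * x := rfl
          rw [this]
          exact (Units.isUnit_units_mul U x).mpr h
        · intro h
          have heq : (Units.mulLeft U) x = (U : ZMod q) * x := rfl
          rw [heq] at h
          exact (Units.isUnit_units_mul U x).mp h
      · intro x _
        rfl
    have hTU : (u ^ n) * TU = TU := by
      rw [hTUdef, Finset.mul_sum]
      calc ∑ x ∈ Finset.univ.filter (fun x : ZMod q => IsUnit x), u ^ n * x ^ n
          = ∑ x ∈ Finset.univ.filter (fun x : ZMod q => IsUnit x), ((U : ZMod q) * x) ^ n := by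
            apply Finset.sum_congr rfl
            intro x _
            rw [mul_pow, hUu]
      _ = TU := hperm
    have hunit1 : IsUnit (u ^ n - 1) := by
      have hcast : ((a ^ n - 1 : ℕ) : ZMod q) = u ^ n - 1 := by
        rw [Nat.cast_sub h1a, hu]
        push_cast
        ring
      rw [← hcast]
      refine (ZMod.isUnit_iff_coprime _ _).mpr ?_
      exact Nat.Coprime.pow_right e ((hp.coprime_iff_not_dvd.mpr hapow).symm)
    have hTU0 : TU = 0 := by
      have h2 : (u ^ n - 1) * TU = 0 := by
        rw [sub_mul, hTU, one_mul, sub_self]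
      exact (IsUnit.mul_right_eq_zero hunit1).mp h2
    have : ((S n n : ℕ) : ZMod q) = (((0 : ℕ)) : ZMod q) := by
      rw [hS, hsplit, huniv,
        ← Finset.sum_filter_add_sum_filter_not Finset.univ (fun x : ZMod q => IsUnit x)
          (fun x => x ^ n)]
      rw [← hTUdef, hTU0, hnonunit]
      simp
    exact (ZMod.natCast_eq_natCast_iff _ _ _).mp this


variable {n : ℕ}

lemma cond_of (hn : 0 < n) (hs : S n n ≡ 43 [MOD n]) {p e : ℕ} (hp : p.Prime) (he : 0 < e)
    (hd : p ^ e ∣ n) : (if (p - 1) ∣ n then n - n / p else 0) ≡ 43 [MOD p ^ e] :=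
  (key_mod hp he hd hn).symm.trans (hs.of_dvd hd)

lemma dd1 (hn : 0 < n) (hs : S n n ≡ 43 [MOD n]) {p e : ℕ} (hp : p.Prime) (he : 0 < e)
    (hd : p ^ e ∣ n) (h1 : (p - 1) ∣ n) : p ^ e ∣ 43 + n / p := by
  have h := cond_of hn hs hp he hd
  rw [if_pos h1] at h
  have h2 : (n - n / p) + n / p ≡ 43 + n / p [MOD p ^ e] := h.add_right _
  rw [Nat.sub_add_cancel (Nat.div_le_self n p)] at h2
  have h3 : n ≡ 0 [MOD p ^ e] := (Nat.modEq_zero_iff_dvd).mpr hd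
  exact (Nat.modEq_zero_iff_dvd).mp (h2.symm.trans h3)

lemma dd2 (hn : 0 < n) (hs : S n n ≡ 43 [MOD n]) {p e : ℕ} (hp : p.Prime) (he : 0 < e)
    (hd : p ^ e ∣ n) (h1 : ¬ (p - 1) ∣ n) : p ^ e ∣ 43 := by
  have h := cond_of hn hs hp he hd
  rw [if_neg h1] at h
  exact (Nat.modEq_zero_iff_dvd).mp h.symm

lemma hPP (hn : 0 < n) (hs : S n n ≡ 43 [MOD n]) {p : ℕ} (hp : p.Prime) (hdp : p ∣ n)
    (hne : p ≠ 43) : (p - 1) ∣ n := by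
  by_contra h1
  have h := dd2 hn hs hp one_pos (by rwa [pow_one]) h1
  rw [pow_one] at h
  exact hne ((Nat.prime_dvd_prime_iff_eq hp (by norm_num)).mp h)

lemma hsq (hn : 0 < n) (hs : S n n ≡ 43 [MOD n]) {p : ℕ} (hp : p.Prime) (hne : p ≠ 43) :
    ¬ (p * p) ∣ n := by
  intro h2
  have hdp : p ∣ n := dvd_trans (dvd_mul_right p p) h2
  have h1 := hPP hn hs hp hdp hne
  have hdd := dd1 hn hs hp (by norm_num : (0:ℕ) < 2) (by rwa [pow_two]) h1
  have hp2 : p ∣ 43 + n / p := dvd_trans (dvd_pow_self p (by norm_num)) hdd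
  have hpnp : p ∣ n / p := (Nat.dvd_div_iff_mul_dvd hdp).mpr h2
  have h43 : p ∣ 43 := (Nat.dvd_add_iff_left hpnp).mpr hp2
  exact hne ((Nat.prime_dvd_prime_iff_eq hp (by norm_num)).mp h43)

lemma h43sq (hn : 0 < n) (hs : S n n ≡ 43 [MOD n]) (h42 : ¬ (42:ℕ) ∣ n) :
    ¬ ((43*43:ℕ)) ∣ n := by
  intro h
  have hdd := dd2 hn hs (p := 43) (by norm_num) (by norm_num : (0:ℕ) < 2)
    (by rw [show (43:ℕ)^2 = 43*43 by norm_num]; exact h) (by simpa using h42)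
  have := Nat.le_of_dvd (by norm_num) hdd
  norm_num at this

lemma h43cube (hn : 0 < n) (hs : S n n ≡ 43 [MOD n]) : ¬ ((43:ℕ)^3) ∣ n := by
  intro h3
  have h43 : (43:ℕ) ∣ n := dvd_trans (by norm_num) h3
  by_cases h42 : (42:ℕ) ∣ n
  · have hdd := dd1 hn hs (p := 43) (by norm_num) (by norm_num : (0:ℕ) < 3) h3
      (by simpa using h42)
    have ha : ((43*43:ℕ)) ∣ 43 + n / 43 := dvd_trans (by norm_num) hdd
    have hb : ((43*43:ℕ)) ∣ n / 43 := (Nat.dvd_div_iff_mul_dvd h43).mpr (by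
      have : (43*43*43 : ℕ) ∣ n := by
        rw [show (43*43*43:ℕ) = 43^3 by norm_num]; exact h3
      rwa [show ((43:ℕ)*43*43) = 43*(43*43) by ring] at this)
    have hc : ((43*43:ℕ)) ∣ 43 := (Nat.dvd_add_iff_left hb).mpr ha
    have := Nat.le_of_dvd (by norm_num) hc
    norm_num at this
  · have hdd := dd2 hn hs (p := 43) (by norm_num) (by norm_num : (0:ℕ) < 2)
      (dvd_trans (pow_dvd_pow 43 (by norm_num)) h3) (by simpa using h42)
    have := Nat.le_of_dvd (by norm_num) hdd
    norm_num at this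

lemma eq_prod_pf {s : Finset ℕ} (hn0 : n ≠ 0) (hsub : n.primeFactors ⊆ s) :
    n = ∏ p ∈ s, p ^ n.factorization p := by
  conv_lhs => rw [← Nat.factorization_prod_pow_eq_self hn0]
  exact Finsupp.prod_of_support_subset _
    (by rw [Nat.support_factorization]; exact hsub) _ (by intros; simp)


set_option maxHeartbeats 2000000 in
lemma support_lemma (hn : 0 < n) (hs : S n n ≡ 43 [MOD n]) (h2 : (2:ℕ) ∣ n)
    (hn4 : ¬ (2*2:ℕ) ∣ n) (hn9 : ¬ (3*3:ℕ) ∣ n) (hn49 : ¬ (7*7:ℕ) ∣ n)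
    (hn433 : ¬ ((43:ℕ)^3) ∣ n) :
    ∀ p ∈ n.primeFactors, p ∈ ({2,3,7,43,77659} : Finset ℕ) := by
  have hn0 : n ≠ 0 := hn.ne'
  by_contra hout
  push_neg at hout
  obtain ⟨p₀, hp₀f, hp₀n⟩ := hout
  set B := n.primeFactors.filter (fun p => p ∉ ({2,3,7,43,77659} : Finset ℕ)) with hBdef
  have hBne : B.Nonempty := ⟨p₀, Finset.mem_filter.mpr ⟨hp₀f, hp₀n⟩⟩
  set r := B.min' hBne with hrdef
  have hrB : r ∈ B := Finset.min'_mem _ _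
  have hrf : r ∈ n.primeFactors := (Finset.mem_filter.mp hrB).1
  have hrnotin : r ∉ ({2,3,7,43,77659} : Finset ℕ) := (Finset.mem_filter.mp hrB).2
  have hrp : r.Prime := Nat.prime_of_mem_primeFactors hrf
  have hrd : r ∣ n := Nat.dvd_of_mem_primeFactors hrf
  simp only [Finset.mem_insert, Finset.mem_singleton, not_or] at hrnotin
  obtain ⟨hr2, hr3, hr7, hr43, hr759⟩ := hrnotin
  have hrP : (r - 1) ∣ n := hPP hn hs hrp hrd hr43
  have hrodd : ¬ 2 ∣ r := fun h =>
    hr2 ((Nat.prime_dvd_prime_iff_eq Nat.prime_two hrp).mp h).symm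
  have hrge : 3 ≤ r := by
    have := hrp.two_le; omega
  set d := (r - 1) / 2 with hddef
  have h2d : 2 * d = r - 1 := by
    have h2r : 2 ∣ r - 1 := by
      rcases Nat.Prime.eq_two_or_odd' hrp with h | h
      · exact absurd h hr2
      · obtain ⟨k, hk⟩ := h; omega
    omega
  have hdn : d ∣ n := dvd_trans ⟨2, by omega⟩ hrP
  have hdpos : 0 < d := by omega
  have hd0 : d ≠ 0 := hdpos.ne'
  have hdodd : ¬ 2 ∣ d := by
    intro h
    obtain ⟨k, hk⟩ := h
    exact hn4 (dvd_trans ⟨k, by omega⟩ hrP)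
  have hdsub : d.primeFactors ⊆ ({3,7,43,77659} : Finset ℕ) := by
    intro t htf
    have htp := Nat.prime_of_mem_primeFactors htf
    have htd := Nat.dvd_of_mem_primeFactors htf
    have htn : t ∣ n := htd.trans hdn
    have htnf : t ∈ n.primeFactors := Nat.mem_primeFactors.mpr ⟨htp, htn, hn0⟩
    have ht2 : t ≠ 2 := by rintro rfl; exact hdodd htd
    by_contra htnot
    have htB : t ∈ B := by
      rw [hBdef]
      refine Finset.mem_filter.mpr ⟨htnf, ?_⟩
      simp only [Finset.mem_insert, Finset.mem_singleton, not_or] at htnot ⊢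
      exact ⟨ht2, htnot.1, htnot.2.1, htnot.2.2.1, htnot.2.2.2⟩
    have hle : r ≤ t := Finset.min'_le _ _ htB
    have hsled : t ≤ d := Nat.le_of_dvd hdpos htd
    omega
  -- exponent caps for d
  have hcap : ∀ m : ℕ, ¬ m ∣ n → ¬ m ∣ d := fun m h1 h2 => h1 (h2.trans hdn)
  have hx : d.factorization 3 ≤ 1 := by
    by_contra h; push_neg at h
    exact (hcap _ hn9) (by
      have : (3:ℕ)^2 ∣ d :=
        (Nat.Prime.pow_dvd_iff_le_factorization (by norm_num) hd0).mpr h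
      simpa [pow_two] using this)
  have hy : d.factorization 7 ≤ 1 := by
    by_contra h; push_neg at h
    exact (hcap _ hn49) (by
      have : (7:ℕ)^2 ∣ d :=
        (Nat.Prime.pow_dvd_iff_le_factorization (by norm_num) hd0).mpr h
      simpa [pow_two] using this)
  have hz : d.factorization 43 ≤ 2 := by
    by_contra h; push_neg at h
    exact (hcap _ hn433) ((Nat.Prime.pow_dvd_iff_le_factorization (by norm_num) hd0).mpr h)
  have hw : d.factorization 77659 ≤ 1 := by
    by_contra h; push_neg at h
    have h759 : ¬ ((77659:ℕ)*77659) ∣ n := hsq hn hs (by norm_num) (by norm_num)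
    exact (hcap _ h759) (by
      have : (77659:ℕ)^2 ∣ d :=
        (Nat.Prime.pow_dvd_iff_le_factorization (by norm_num) hd0).mpr h
      simpa [pow_two] using this)
  have hform := eq_prod_pf hd0 hdsub
  rw [Finset.prod_insert (by norm_num), Finset.prod_insert (by norm_num),
    Finset.prod_insert (by norm_num), Finset.prod_singleton] at hform
  have hreq : r = 2 * d + 1 := by omega
  obtain ⟨x, hxe⟩ : ∃ x, d.factorization 3 = x := ⟨_, rfl⟩
  obtain ⟨y, hye⟩ : ∃ y, d.factorization 7 = y := ⟨_, rfl⟩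
  obtain ⟨z, hze⟩ : ∃ z, d.factorization 43 = z := ⟨_, rfl⟩
  obtain ⟨w, hwe⟩ : ∃ w, d.factorization 77659 = w := ⟨_, rfl⟩
  rw [hxe, hye, hze, hwe] at hform
  rw [hxe] at hx; rw [hye] at hy; rw [hze] at hz; rw [hwe] at hw
  interval_cases x <;> interval_cases y <;> interval_cases z <;> interval_cases w <;>
    (norm_num at hform; rw [hform] at hreq) <;>
    first
      | (exfalso; revert hrp; rw [hreq]; norm_num; done)
      | (exfalso; omega)

set_option maxHeartbeats 2000000 in
lemma forward (hn : 0 < n) (hs : S n n ≡ 43 [MOD n]) :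
    n = 1 ∨ n = 2 ∨ n = 6 ∨ n = 42 ∨ n = 43 ∨ n = 86 ∨ n = 258 ∨ n = 77658 := by
  have hn0 : n ≠ 0 := hn.ne'
  have hn4 : ¬ (2*2:ℕ) ∣ n := hsq hn hs (by norm_num) (by norm_num)
  have hn9 : ¬ (3*3:ℕ) ∣ n := hsq hn hs (by norm_num) (by norm_num)
  have hn49 : ¬ (7*7:ℕ) ∣ n := hsq hn hs (by norm_num) (by norm_num)
  have hn433 : ¬ ((43:ℕ)^3) ∣ n := h43cube hn hs
  by_cases h2 : (2:ℕ) ∣ n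
  · -- even case
    -- every prime factor is in {2,3,7,43,77659}
    have hout2 := support_lemma hn hs h2 hn4 hn9 hn49 hn433
    by_cases h759 : (77659:ℕ) ∣ n
    · -- then 77658 ∣ n and n is pinned, contradiction
      exfalso
      have h77658 : (77658:ℕ) ∣ n := by
        have := hPP hn hs (p := 77659) (by norm_num) h759 (by norm_num)
        simpa using this
      have ha : n.factorization 2 = 1 := by
        have h1 : 1 ≤ n.factorization 2 :=
          (Nat.Prime.pow_dvd_iff_le_factorization (by norm_num) hn0).mp (by simpa using h2)
        have h2' : ¬ 2 ≤ n.factorization 2 := fun h =>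
          hn4 (by simpa [pow_two] using
            (Nat.Prime.pow_dvd_iff_le_factorization (by norm_num) hn0).mpr h)
        exact le_antisymm (Nat.lt_succ_iff.mp (Nat.lt_of_not_le h2')) h1
      have hb : n.factorization 3 = 1 := by
        have h3n : (3:ℕ) ∣ n := dvd_trans (by norm_num) h77658
        have h1 : 1 ≤ n.factorization 3 :=
          (Nat.Prime.pow_dvd_iff_le_factorization (by norm_num) hn0).mp (by simpa using h3n)
        have h2' : ¬ 2 ≤ n.factorization 3 := fun h =>
          hn9 (by simpa [pow_two] using
            (Nat.Prime.pow_dvd_iff_le_factorization (by norm_num) hn0).mpr h)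
        exact le_antisymm (Nat.lt_succ_iff.mp (Nat.lt_of_not_le h2')) h1
      have hc : n.factorization 7 = 1 := by
        have h7n : (7:ℕ) ∣ n := dvd_trans (by norm_num) h77658
        have h1 : 1 ≤ n.factorization 7 :=
          (Nat.Prime.pow_dvd_iff_le_factorization (by norm_num) hn0).mp (by simpa using h7n)
        have h2' : ¬ 2 ≤ n.factorization 7 := fun h =>
          hn49 (by simpa [pow_two] using
            (Nat.Prime.pow_dvd_iff_le_factorization (by norm_num) hn0).mpr h)
        exact le_antisymm (Nat.lt_succ_iff.mp (Nat.lt_of_not_le h2')) h1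
      have hg : n.factorization 43 = 2 := by
        have h43n : (43:ℕ)^2 ∣ n := dvd_trans (by norm_num) h77658
        have h1 : 2 ≤ n.factorization 43 :=
          (Nat.Prime.pow_dvd_iff_le_factorization (by norm_num) hn0).mp h43n
        have h2' : ¬ 3 ≤ n.factorization 43 := fun h =>
          hn433 ((Nat.Prime.pow_dvd_iff_le_factorization (by norm_num) hn0).mpr h)
        exact le_antisymm (Nat.lt_succ_iff.mp (Nat.lt_of_not_le h2')) h1
      have hh : n.factorization 77659 = 1 := by
        have h1 : 1 ≤ n.factorization 77659 :=
          (Nat.Prime.pow_dvd_iff_le_factorization (by norm_num) hn0).mp (by simpa using h759)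
        have h2' : ¬ 2 ≤ n.factorization 77659 := fun h =>
          (hsq hn hs (p := 77659) (by norm_num) (by norm_num))
            (by simpa [pow_two] using
              (Nat.Prime.pow_dvd_iff_le_factorization (by norm_num) hn0).mpr h)
        exact le_antisymm (Nat.lt_succ_iff.mp (Nat.lt_of_not_le h2')) h1
      have hsub5 : n.primeFactors ⊆ ({2,3,7,43,77659} : Finset ℕ) := fun p hp => hout2 p hp
      have hform := eq_prod_pf hn0 hsub5
      rw [Finset.prod_insert (by norm_num), Finset.prod_insert (by norm_num),
        Finset.prod_insert (by norm_num), Finset.prod_insert (by norm_num),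
        Finset.prod_singleton] at hform
      rw [ha, hb, hc, hg, hh] at hform
      norm_num at hform
      -- hform : n = 6030842622
      have hdd := dd1 hn hs (p := 77659) (by norm_num) one_pos
        (by rw [pow_one, hform]; norm_num) (by rw [hform]; norm_num)
      rw [pow_one, hform] at hdd
      norm_num at hdd
    · -- support ⊆ {2,3,7,43}
      have hsub4 : n.primeFactors ⊆ ({2,3,7,43} : Finset ℕ) := by
        intro p hp
        have h5 := hout2 p hp
        simp only [Finset.mem_insert, Finset.mem_singleton] at h5 ⊢
        rcases h5 with h | h | h | h | h
        · exact Or.inl h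
        · exact Or.inr (Or.inl h)
        · exact Or.inr (Or.inr (Or.inl h))
        · exact Or.inr (Or.inr (Or.inr h))
        · exfalso; exact h759 (h ▸ Nat.dvd_of_mem_primeFactors hp)
      have ha : n.factorization 2 = 1 := by
        have h1 : 1 ≤ n.factorization 2 :=
          (Nat.Prime.pow_dvd_iff_le_factorization (by norm_num) hn0).mp (by simpa using h2)
        have h2' : ¬ 2 ≤ n.factorization 2 := fun h =>
          hn4 (by simpa [pow_two] using
            (Nat.Prime.pow_dvd_iff_le_factorization (by norm_num) hn0).mpr h)
        exact le_antisymm (Nat.lt_succ_iff.mp (Nat.lt_of_not_le h2')) h1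
      have hb : n.factorization 3 ≤ 1 := by
        by_contra h; push_neg at h
        exact hn9 (by simpa [pow_two] using
          (Nat.Prime.pow_dvd_iff_le_factorization (by norm_num) hn0).mpr h)
      have hc : n.factorization 7 ≤ 1 := by
        by_contra h; push_neg at h
        exact hn49 (by simpa [pow_two] using
          (Nat.Prime.pow_dvd_iff_le_factorization (by norm_num) hn0).mpr h)
      have hg : n.factorization 43 ≤ 2 := by
        by_contra h; push_neg at h
        exact hn433 ((Nat.Prime.pow_dvd_iff_le_factorization (by norm_num) hn0).mpr h)
      have hform := eq_prod_pf hn0 hsub4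
      rw [Finset.prod_insert (by norm_num), Finset.prod_insert (by norm_num),
        Finset.prod_insert (by norm_num), Finset.prod_singleton] at hform
      rw [ha] at hform
      obtain ⟨b, hbe⟩ : ∃ b, n.factorization 3 = b := ⟨_, rfl⟩
      obtain ⟨c, hce⟩ : ∃ c, n.factorization 7 = c := ⟨_, rfl⟩
      obtain ⟨g, hge⟩ : ∃ g, n.factorization 43 = g := ⟨_, rfl⟩
      rw [hbe] at hb; rw [hce] at hc; rw [hge] at hg
      rw [hbe, hce, hge] at hform
      have hkill7 : ∀ m : ℕ, n = m → (7:ℕ) ∣ m → ¬ (6:ℕ) ∣ m → False := by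
        intro m hm h7 h6
        have := hPP hn hs (p := 7) (by norm_num) (hm ▸ h7) (by norm_num)
        rw [hm] at this
        exact h6 (by simpa using this)
      interval_cases b <;> interval_cases c <;> interval_cases g <;> norm_num at hform
      · exact Or.inr (Or.inl hform)                 -- n = 2
      · exact Or.inr (Or.inr (Or.inr (Or.inr (Or.inr (Or.inl hform)))))  -- n = 86
      · -- n = 3698 = 2 * 43^2
        exfalso
        refine h43sq hn hs ?_ (by rw [hform]; norm_num)
        rw [hform]; norm_num
      · exfalso; exact hkill7 14 hform (by norm_num) (by norm_num)
      · exfalso; exact hkill7 602 hform (by norm_num) (by norm_num)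
      · exfalso; exact hkill7 25886 hform (by norm_num) (by norm_num)
      · exact Or.inr (Or.inr (Or.inl hform))        -- n = 6
      · exact Or.inr (Or.inr (Or.inr (Or.inr (Or.inr (Or.inr (Or.inl hform))))))  -- n = 258
      · -- n = 11094 = 2*3*43^2
        exfalso
        refine h43sq hn hs ?_ (by rw [hform]; norm_num)
        rw [hform]; norm_num
      · exact Or.inr (Or.inr (Or.inr (Or.inl hform)))  -- n = 42
      · -- n = 1806
        exfalso
        have hdd := dd1 hn hs (p := 43) (by norm_num) one_pos
          (by rw [pow_one, hform]; norm_num) (by rw [hform]; norm_num)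
        rw [pow_one, hform] at hdd
        norm_num at hdd
      · exact Or.inr (Or.inr (Or.inr (Or.inr (Or.inr (Or.inr (Or.inr hform))))))  -- n = 77658
  · -- odd case
    have h42 : ¬ (42:ℕ) ∣ n := fun h => h2 (dvd_trans (by norm_num) h)
    have hsub : n.primeFactors ⊆ ({43} : Finset ℕ) := by
      intro p hp
      have hpprime : p.Prime := Nat.prime_of_mem_primeFactors hp
      have hpdvd : p ∣ n := Nat.dvd_of_mem_primeFactors hp
      simp only [Finset.mem_singleton]
      by_contra hne
      have h1 := hPP hn hs hpprime hpdvd hne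
      have hodd : p ≠ 2 := by rintro rfl; exact h2 hpdvd
      have hdvd2 : (2:ℕ) ∣ p - 1 := by
        rcases Nat.Prime.eq_two_or_odd' hpprime with h | h
        · exact absurd h hodd
        · obtain ⟨k, hk⟩ := h
          have := hpprime.two_le
          omega
      exact h2 (dvd_trans hdvd2 h1)
    have hform := eq_prod_pf hn0 hsub
    rw [Finset.prod_singleton] at hform
    have hg : n.factorization 43 ≤ 1 := by
      by_contra h; push_neg at h
      exact (h43sq hn hs h42) (by simpa [pow_two] using
        (Nat.Prime.pow_dvd_iff_le_factorization (by norm_num) hn0).mpr h)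
    obtain ⟨g, hge⟩ : ∃ g, n.factorization 43 = g := ⟨_, rfl⟩
    rw [hge] at hg; rw [hge] at hform
    interval_cases g <;> norm_num at hform
    · exact Or.inl hform
    · exact Or.inr (Or.inr (Or.inr (Or.inr (Or.inl hform))))


lemma glue {a b m k l : ℕ} (hm : m = k * l) (hco : Nat.Coprime k l)
    (h1 : a ≡ b [MOD k]) (h2 : a ≡ b [MOD l]) : a ≡ b [MOD m] := by
  subst hm
  exact (Nat.modEq_and_modEq_iff_modEq_mul hco).mp ⟨h1, h2⟩

lemma bstep (n p e c : ℕ) (hp : p.Prime) (he : 0 < e) (hd : p ^ e ∣ n) (hn : 0 < n)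
    (hq : p ^ e = c)
    (hX : (if (p - 1) ∣ n then n - n / p else 0) ≡ 43 [MOD c]) : S n n ≡ 43 [MOD c] := by
  subst hq
  exact (key_mod hp he hd hn).trans hX

lemma back2 : S 2 2 ≡ 43 [MOD 2] :=
  bstep 2 2 1 2 (by norm_num) one_pos (by norm_num) (by norm_num) (by norm_num)
    (by norm_num [Nat.ModEq])

lemma back6 : S 6 6 ≡ 43 [MOD 6] := by
  refine glue (by norm_num : (6:ℕ) = 2 * 3) (by norm_num) ?_ ?_
  · exact bstep 6 2 1 2 (by norm_num) one_pos (by norm_num) (by norm_num) (by norm_num)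
      (by norm_num [Nat.ModEq])
  · exact bstep 6 3 1 3 (by norm_num) one_pos (by norm_num) (by norm_num) (by norm_num)
      (by norm_num [Nat.ModEq])

lemma back42 : S 42 42 ≡ 43 [MOD 42] := by
  refine glue (by norm_num : (42:ℕ) = 6 * 7) (by norm_num) ?_ ?_
  · refine glue (by norm_num : (6:ℕ) = 2 * 3) (by norm_num) ?_ ?_
    · exact bstep 42 2 1 2 (by norm_num) one_pos (by norm_num) (by norm_num) (by norm_num)
        (by norm_num [Nat.ModEq])
    · exact bstep 42 3 1 3 (by norm_num) one_pos (by norm_num) (by norm_num) (by norm_num)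
        (by norm_num [Nat.ModEq])
  · exact bstep 42 7 1 7 (by norm_num) one_pos (by norm_num) (by norm_num) (by norm_num)
      (by norm_num [Nat.ModEq])

lemma back43 : S 43 43 ≡ 43 [MOD 43] :=
  bstep 43 43 1 43 (by norm_num) one_pos (by norm_num) (by norm_num) (by norm_num)
    (by norm_num [Nat.ModEq])

lemma back86 : S 86 86 ≡ 43 [MOD 86] := by
  refine glue (by norm_num : (86:ℕ) = 2 * 43) (by norm_num) ?_ ?_
  · exact bstep 86 2 1 2 (by norm_num) one_pos (by norm_num) (by norm_num) (by norm_num)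
      (by norm_num [Nat.ModEq])
  · exact bstep 86 43 1 43 (by norm_num) one_pos (by norm_num) (by norm_num) (by norm_num)
      (by norm_num [Nat.ModEq])

lemma back258 : S 258 258 ≡ 43 [MOD 258] := by
  refine glue (by norm_num : (258:ℕ) = 6 * 43) (by norm_num) ?_ ?_
  · refine glue (by norm_num : (6:ℕ) = 2 * 3) (by norm_num) ?_ ?_
    · exact bstep 258 2 1 2 (by norm_num) one_pos (by norm_num) (by norm_num) (by norm_num)
        (by norm_num [Nat.ModEq])
    · exact bstep 258 3 1 3 (by norm_num) one_pos (by norm_num) (by norm_num) (by norm_num)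
        (by norm_num [Nat.ModEq])
  · exact bstep 258 43 1 43 (by norm_num) one_pos (by norm_num) (by norm_num) (by norm_num)
      (by norm_num [Nat.ModEq])

lemma back77658 : S 77658 77658 ≡ 43 [MOD 77658] := by
  refine glue (by norm_num : (77658:ℕ) = 42 * 1849) (by norm_num) ?_ ?_
  · refine glue (by norm_num : (42:ℕ) = 6 * 7) (by norm_num) ?_ ?_
    · refine glue (by norm_num : (6:ℕ) = 2 * 3) (by norm_num) ?_ ?_
      · exact bstep 77658 2 1 2 (by norm_num) one_pos (by norm_num) (by norm_num) (by norm_num)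
          (by norm_num [Nat.ModEq])
      · exact bstep 77658 3 1 3 (by norm_num) one_pos (by norm_num) (by norm_num) (by norm_num)
          (by norm_num [Nat.ModEq])
    · exact bstep 77658 7 1 7 (by norm_num) one_pos (by norm_num) (by norm_num) (by norm_num)
        (by norm_num [Nat.ModEq])
  · exact bstep 77658 43 2 1849 (by norm_num) (by norm_num) (by norm_num) (by norm_num)
      (by norm_num) (by norm_num [Nat.ModEq])

end Stmt11




/-- `M_43 = {1, 2, 6, 42, 43, 86, 258, 77658}`. -/
theorem stmt_11 :
    {n : ℕ | 0 < n ∧ S n n ≡ 43 [MOD n]} = {1, 2, 6, 42, 43, 86, 258, 77658} := by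
  ext n
  simp only [Set.mem_setOf_eq, Set.mem_insert_iff, Set.mem_singleton_iff]
  constructor
  · rintro ⟨hn, hs⟩
    exact Stmt11.forward hn hs
  · rintro (rfl | rfl | rfl | rfl | rfl | rfl | rfl | rfl)
    · exact ⟨one_pos, Nat.modEq_one⟩
    · exact ⟨by norm_num, Stmt11.back2⟩
    · exact ⟨by norm_num, Stmt11.back6⟩
    · exact ⟨by norm_num, Stmt11.back42⟩
    · exact ⟨by norm_num, Stmt11.back43⟩
    · exact ⟨by norm_num, Stmt11.back86⟩
    · exact ⟨by norm_num, Stmt11.back258⟩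
    · exact ⟨by norm_num, Stmt11.back77658⟩
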